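/- Let X be a metric measure space with polynomial volume growth exponent ν and lower ball volume bound as above, Γ ⊆ X uniformly discrete with packing radius r, and let {w_γ}_{γ∈Γ} be a Γ-uniformly localized family: for every μ > 0 there is C_μ with |w_γ(x)| ≤ C_μ (1 + d(x,γ))^{-μ} for all γ, x. For R > 0 let w_γ^R = w_γ · 1_{B_R(γ)} be the truncation. Let {v_γ} be functions with supp v_γ ⊆ B_r(γ) and |v_γ| ≤ c₀, and let V, V^R be the operators Σ_γ w_γ ⊗ v_γ* and Σ_γ w_γ^R ⊗ v_γ*. Then ‖V - V^R‖ → 0 as R → ∞; more precisely, for any fixed μ > ν there is a constant C with ‖V - V^R‖ ≤ C (1+R)^{ν-μ}. -/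

import Mathlib

open MeasureTheory Metric
open scoped ENNReal NNReal

set_option maxHeartbeats 1000000

private lemma aux_conj2 : Real.HolderConjugate 2 2 := ⟨by norm_num, by norm_num, by norm_num⟩

private lemma aux_cs {ι : Type*} (a b : ι → ℝ≥0∞) :
    ∑' i, a i * b i ≤ (∑' i, a i ^ (2:ℝ)) ^ (2⁻¹:ℝ) * (∑' i, b i ^ (2:ℝ)) ^ (2⁻¹:ℝ) := by
  rw [ENNReal.tsum_eq_iSup_sum]
  refine iSup_le fun s => ?_
  calc ∑ i ∈ s, a i * b i
      ≤ (∑ i ∈ s, a i ^ (2:ℝ)) ^ (1/2:ℝ) * (∑ i ∈ s, b i ^ (2:ℝ)) ^ (1/2:ℝ) :=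
        ENNReal.inner_le_Lp_mul_Lq s a b aux_conj2
    _ ≤ (∑' i, a i ^ (2:ℝ)) ^ (1/2:ℝ) * (∑' i, b i ^ (2:ℝ)) ^ (1/2:ℝ) := by
        gcongr <;> exact ENNReal.sum_le_tsum s
    _ = _ := by rw [one_div]

private lemma aux_enorm_tsum {ι : Type*} (z : ι → ℂ) :
    (‖∑' i, z i‖₊ : ℝ≥0∞) ≤ ∑' i, (‖z i‖₊ : ℝ≥0∞) := by
  by_cases h : ∑' i, (‖z i‖₊ : ℝ≥0∞) = ⊤
  · simp [h]
  · have hs : Summable fun i => ‖z i‖₊ := ENNReal.tsum_coe_ne_top_iff_summable.mp h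
    have hnorm : Summable fun i => ‖z i‖ := by
      simpa using NNReal.summable_coe.mpr hs
    have h2 := norm_tsum_le_tsum_norm hnorm
    rw [← ENNReal.coe_tsum hs]
    rw [ENNReal.coe_le_coe, ← NNReal.coe_le_coe]
    simpa [NNReal.coe_tsum] using h2

private lemma aux_series_ne_top {e : ℝ} (he : e < -1) :
    (∑' k : ℕ, ENNReal.ofReal ((1 + (k:ℝ)) ^ e)) ≠ ⊤ := by
  have h1 : Summable fun k : ℕ => ((k:ℝ)) ^ e := Real.summable_nat_rpow.mpr he
  have h2 : Summable fun k : ℕ => (1 + (k:ℝ)) ^ e := by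
    have h3 := (summable_nat_add_iff 1).mpr h1
    apply h3.congr
    intro n
    push_cast
    ring_nf
  rw [← ENNReal.ofReal_tsum_of_nonneg (fun k => Real.rpow_nonneg (by positivity) e) h2]
  exact ENNReal.ofReal_ne_top

private lemma aux_sq (z : ℝ≥0∞) : (z ^ (2⁻¹:ℝ)) ^ (2:ℝ) = z := by
  rw [← ENNReal.rpow_mul]; norm_num

private lemma aux_sq' (z : ℝ≥0∞) : (z ^ (2:ℝ)) ^ (2⁻¹:ℝ) = z := by
  rw [← ENNReal.rpow_mul]; norm_num

private lemma aux_mulsq (z w : ℝ≥0∞) : (z * w) ^ (2:ℝ) = z ^ (2:ℝ) * w ^ (2:ℝ) :=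
  ENNReal.mul_rpow_of_nonneg _ _ (by norm_num)

private lemma aux_mulhalf (z w : ℝ≥0∞) : (z * w) ^ (2⁻¹:ℝ) = z ^ (2⁻¹:ℝ) * w ^ (2⁻¹:ℝ) :=
  ENNReal.mul_rpow_of_nonneg _ _ (by norm_num)

private lemma aux_selfmul (z : ℝ≥0∞) : z * z = z ^ (2:ℝ) := by
  rw [show ((2:ℝ)) = ((2:ℕ):ℝ) by norm_num, ENNReal.rpow_natCast]; ring

private lemma aux_tail {X : Type*} [MetricSpace X] [MeasurableSpace X] [BorelSpace X]
    (vol : Measure X) (A ν : ℝ) (hA : 0 < A) (hν : 0 < ν)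
    (hgrowth : ∀ (x : X) (R : ℝ), 0 ≤ R → vol (ball x R) ≤ ENNReal.ofReal (A * (1 + R) ^ ν))
    (m : ℝ) (hm : ν < m) (z : X) (T : ℝ) :
    ∫⁻ y, ((ball z T)ᶜ).indicator (fun y => ENNReal.ofReal ((1 + dist y z) ^ (-m))) y ∂vol ≤
      ENNReal.ofReal (A * 2 ^ ν * (1 + max T 0) ^ ((ν - m)/2)) *
        ∑' k : ℕ, ENNReal.ofReal ((1 + (k:ℝ)) ^ ((ν - m)/2)) := by
  set t := max T 0 with ht
  have ht0 : 0 ≤ t := le_max_right _ _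
  set e := (ν - m)/2 with he
  have he0 : e ≤ 0 := by rw [he]; linarith
  rw [lintegral_indicator measurableSet_ball.compl]
  have hsub : (ball z T)ᶜ ⊆ ⋃ k : ℕ, (ball z (t + k + 1) \ ball z (t + k)) := by
    intro y hy
    simp only [Set.mem_compl_iff, mem_ball, not_lt] at hy
    have hd : t ≤ dist y z := max_le hy dist_nonneg
    refine Set.mem_iUnion.mpr ⟨Nat.floor (dist y z - t), ?_, ?_⟩
    · have h1 := Nat.lt_floor_add_one (dist y z - t)
      exact mem_ball.mpr (by push_cast; linarith)
    · have h2 := Nat.floor_le (sub_nonneg.mpr hd)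
      simp only [mem_ball, not_lt]
      push_cast
      linarith
  calc ∫⁻ y in (ball z T)ᶜ, ENNReal.ofReal ((1 + dist y z) ^ (-m)) ∂vol
      ≤ ∫⁻ y in ⋃ k : ℕ, (ball z (t + k + 1) \ ball z (t + k)),
          ENNReal.ofReal ((1 + dist y z) ^ (-m)) ∂vol := lintegral_mono_set hsub
    _ ≤ ∑' k : ℕ, ∫⁻ y in ball z (t + k + 1) \ ball z (t + k),
          ENNReal.ofReal ((1 + dist y z) ^ (-m)) ∂vol := lintegral_iUnion_le _ _
    _ ≤ ∑' k : ℕ, ENNReal.ofReal ((A * 2 ^ ν * (1 + t) ^ e) * (1 + (k:ℝ)) ^ e) := by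
        refine ENNReal.tsum_le_tsum fun k => ?_
        have hk0 : (0:ℝ) ≤ t + k := by positivity
        have hs1 : (0:ℝ) < 1 + (t + k) := by linarith
        calc ∫⁻ y in ball z (t + k + 1) \ ball z (t + k),
              ENNReal.ofReal ((1 + dist y z) ^ (-m)) ∂vol
            ≤ ∫⁻ _ in ball z (t + k + 1) \ ball z (t + k),
              ENNReal.ofReal ((1 + (t + k)) ^ (-m)) ∂vol := by
              refine setLIntegral_mono' (measurableSet_ball.diff measurableSet_ball) fun y hy => ?_
              rcases hy with ⟨_, hy2⟩
              simp only [mem_ball, not_lt] at hy2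
              exact ENNReal.ofReal_le_ofReal
                (Real.rpow_le_rpow_of_nonpos hs1 (by linarith) (by linarith))
          _ = ENNReal.ofReal ((1 + (t + k)) ^ (-m)) *
                vol (ball z (t + k + 1) \ ball z (t + k)) := setLIntegral_const _ _
          _ ≤ ENNReal.ofReal ((1 + (t + k)) ^ (-m)) * ENNReal.ofReal (A * (1 + (t + k + 1)) ^ ν) := by
              gcongr
              exact le_trans (measure_mono Set.diff_subset) (hgrowth z _ (by positivity))
          _ = ENNReal.ofReal ((1 + (t + k)) ^ (-m) * (A * (1 + (t + k + 1)) ^ ν)) := by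
              rw [← ENNReal.ofReal_mul (Real.rpow_nonneg (by linarith) _)]
          _ ≤ ENNReal.ofReal ((A * 2 ^ ν * (1 + t) ^ e) * (1 + (k:ℝ)) ^ e) := by
              apply ENNReal.ofReal_le_ofReal
              have h1 : (1 + (t + k + 1)) ^ ν ≤ 2 ^ ν * (1 + (t + k)) ^ ν := by
                rw [← Real.mul_rpow (by norm_num) (by linarith)]
                exact Real.rpow_le_rpow (by linarith) (by linarith) hν.le
              have h2 : (1 + (t + k)) ^ (-m) * (1 + (t + k)) ^ ν = (1 + (t + k)) ^ (ν - m) := by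
                rw [← Real.rpow_add hs1]; ring_nf
              have h3 : (1 + (t + k)) ^ (ν - m) ≤ (1 + t) ^ e * (1 + (k:ℝ)) ^ e := by
                have hb : (0:ℝ) < (1 + t) * (1 + (k:ℝ)) := by positivity
                have hsq : (1 + t) * (1 + (k:ℝ)) ≤ (1 + (t + k)) ^ (2:ℝ) := by
                  rw [show ((2:ℝ)) = ((2:ℕ):ℝ) by norm_num, Real.rpow_natCast]
                  have hk : (0:ℝ) ≤ (k:ℝ) := Nat.cast_nonneg k
                  nlinarith
                have h4 : ((1 + (t + k)) ^ (2:ℝ)) ^ e ≤ ((1 + t) * (1 + (k:ℝ))) ^ e :=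
                  Real.rpow_le_rpow_of_nonpos hb hsq he0
                rw [← Real.rpow_mul (by linarith) 2 e] at h4
                rw [Real.mul_rpow (by positivity) (by positivity)] at h4
                calc (1 + (t + k)) ^ (ν - m) = (1 + (t + k)) ^ (2 * e) := by rw [he]; ring_nf
                  _ ≤ (1 + t) ^ e * (1 + (k:ℝ)) ^ e := h4
              have hnn1 : (0:ℝ) ≤ (1 + (t + k)) ^ (-m) := Real.rpow_nonneg (by linarith) _
              calc (1 + (t + k)) ^ (-m) * (A * (1 + (t + k + 1)) ^ ν)
                  ≤ (1 + (t + k)) ^ (-m) * (A * (2 ^ ν * (1 + (t + k)) ^ ν)) := by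
                    have h5 := mul_le_mul_of_nonneg_left h1 hA.le
                    exact mul_le_mul_of_nonneg_left h5 hnn1
                _ = (A * 2 ^ ν) * ((1 + (t + k)) ^ (-m) * (1 + (t + k)) ^ ν) := by ring
                _ = (A * 2 ^ ν) * (1 + (t + k)) ^ (ν - m) := by rw [h2]
                _ ≤ (A * 2 ^ ν) * ((1 + t) ^ e * (1 + (k:ℝ)) ^ e) := by
                    have hA2 : (0:ℝ) ≤ A * 2 ^ ν := by positivity
                    exact mul_le_mul_of_nonneg_left h3 hA2
                _ = (A * 2 ^ ν * (1 + t) ^ e) * (1 + (k:ℝ)) ^ e := by ring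
    _ = ENNReal.ofReal (A * 2 ^ ν * (1 + t) ^ e) *
          ∑' k : ℕ, ENNReal.ofReal ((1 + (k:ℝ)) ^ e) := by
        rw [← ENNReal.tsum_mul_left]
        congr 1
        funext k
        rw [← ENNReal.ofReal_mul (by positivity)]

/-- Let `X` have polynomial volume growth exponent `ν` and a lower ball
volume bound, `Γ ⊆ X` uniformly discrete with packing radius `r`, `{w_γ}` a `Γ`-uniformly
localized family, and `{v_γ}` uniformly bounded functions with `supp v_γ ⊆ B_r(γ)`.
Let `V = Σ_γ w_γ ⊗ v_γ*` and `V^R` its truncation using `w_γ^R = w_γ · 1_{B_R(γ)}`.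
Then for any fixed `μ > ν` there is a constant `C` with `‖V - V^R‖ ≤ C (1+R)^{ν-μ}`
(so in particular `‖V - V^R‖ → 0` as `R → ∞`). -/
theorem stmt12 {X : Type*} [MetricSpace X] [MeasurableSpace X] [BorelSpace X]
    (vol : Measure X) (A ν : ℝ) (hA : 0 < A) (hν : 0 < ν)
    (hgrowth : ∀ (x : X) (R : ℝ), 0 ≤ R →
      vol (ball x R) ≤ ENNReal.ofReal (A * (1 + R) ^ ν))
    (v₀ r₀ d : ℝ) (hv₀ : 0 < v₀) (hr₀ : 0 < r₀) (hd : 1 ≤ d)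
    (hlower : ∀ (x : X) (ρ : ℝ), 0 ≤ ρ → ρ ≤ r₀ →
      ENNReal.ofReal (v₀ * ρ ^ d) ≤ vol (ball x ρ))
    (Γ : Set X) (r : ℝ) (hr : 0 < r)
    (hΓ : Γ.Pairwise fun γ γ' => Disjoint (ball γ r) (ball γ' r))
    (w : Γ → X → ℂ) (hwmeas : ∀ γ : Γ, Measurable (w γ))
    (hwloc : ∀ μ' : ℝ, 0 < μ' → ∃ C : ℝ, 0 < C ∧ ∀ (γ : Γ) (x : X),
      ‖w γ x‖ ≤ C * (1 + dist x (γ : X)) ^ (-μ'))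
    (v : Γ → X → ℂ) (hvmeas : ∀ γ : Γ, Measurable (v γ))
    (c₀ : ℝ) (hc₀ : 0 < c₀)
    (hvsupp : ∀ (γ : Γ) (x : X), v γ x ≠ 0 → x ∈ ball (γ : X) r)
    (hvbound : ∀ (γ : Γ) (x : X), ‖v γ x‖ ≤ c₀) :
    ∀ μ' : ℝ, ν < μ' → ∃ C : ℝ, 0 < C ∧ ∀ R : ℝ, 0 < R → ∀ f : X → ℂ, MemLp f 2 vol →
      eLpNorm
        (fun x =>
          (∑' γ : Γ, (∫ y, (starRingEnd ℂ) (v γ y) * f y ∂vol) * w γ x) -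
          (∑' γ : Γ, (∫ y, (starRingEnd ℂ) (v γ y) * f y ∂vol) *
            Set.indicator (ball (γ : X) R) (w γ) x))
        2 vol
      ≤ ENNReal.ofReal (C * (1 + R) ^ (ν - μ')) * eLpNorm f 2 vol := by
  intro μ' hμ'
  have hν' : 0 < μ' := lt_trans hν hμ'
  set m : ℝ := 2*μ' + ν + 4 with hmdef
  have hm0 : 0 < m := by nlinarith
  have hmν : ν < m := by nlinarith
  have helt : (ν - m)/2 < -1 := by rw [hmdef]; ring_nf; nlinarith
  set e : ℝ := (ν - m)/2 with hedef
  have he0 : e ≤ 0 := by rw [hedef]; nlinarith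
  have heμ : e ≤ ν - μ' := by rw [hedef, hmdef]; ring_nf; nlinarith
  obtain ⟨Cm, hCm, hwb⟩ := hwloc m hm0
  set ρ := min r r₀ with hρdef
  have hρ0 : 0 < ρ := lt_min hr hr₀
  have hρr : ρ ≤ r := min_le_left _ _
  have hρr₀ : ρ ≤ r₀ := min_le_right _ _
  have hρd : (0:ℝ) < v₀ * ρ ^ d := by
    have := Real.rpow_pos_of_pos hρ0 d
    positivity
  -- countability of Γ
  have hcnt : Γ.Countable := by
    rcases isEmpty_or_nonempty X with hX | hX
    · exact Set.to_countable Γ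
    obtain ⟨x₀⟩ := hX
    have hfin : ∀ n : ℕ, (Γ ∩ ball x₀ n).Finite := by
      intro n
      by_contra hinf
      have hinf : (Γ ∩ ball x₀ n).Infinite := hinf
      have hεne : ENNReal.ofReal (v₀ * ρ ^ d) ≠ 0 := by
        simp [ENNReal.ofReal_eq_zero, not_le, hρd]
      obtain ⟨N, hN⟩ := ENNReal.exists_nat_gt
        (show ENNReal.ofReal (A * (1 + ((n:ℝ) + ρ)) ^ ν) / ENNReal.ofReal (v₀ * ρ ^ d) ≠ ⊤ from
          (ENNReal.div_lt_top ENNReal.ofReal_ne_top hεne).ne)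
      have hBlt : ENNReal.ofReal (A * (1 + ((n:ℝ) + ρ)) ^ ν) <
          (N : ℝ≥0∞) * ENNReal.ofReal (v₀ * ρ ^ d) := by
        rw [ENNReal.div_lt_iff (Or.inl hεne) (Or.inl ENNReal.ofReal_ne_top)] at hN
        exact hN
      obtain ⟨t, htsub, htcard⟩ := hinf.exists_subset_card_eq N
      have hdisj' : ∀ γ ∈ t, ∀ γ' ∈ t, γ ≠ γ' → Disjoint (ball γ ρ) (ball γ' ρ) := by
        intro γ hγ γ' hγ' hne
        have h1 := hΓ (htsub hγ).1 (htsub hγ').1 hne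
        exact h1.mono (ball_subset_ball hρr) (ball_subset_ball hρr)
      have hsum : vol (⋃ γ ∈ t, ball γ ρ) = ∑ γ ∈ t, vol (ball γ ρ) :=
        measure_biUnion_finset (fun γ hγ γ' hγ' hne => hdisj' γ hγ γ' hγ' hne)
          (fun γ _ => measurableSet_ball)
      have hsub2 : (⋃ γ ∈ t, ball γ ρ) ⊆ ball x₀ ((n:ℝ) + ρ) := by
        intro y hy
        simp only [Set.mem_iUnion] at hy
        obtain ⟨γ, hγ, hyγ⟩ := hy
        have hγn : dist γ x₀ < n := mem_ball.mp (htsub hγ).2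
        have h6 : dist y x₀ ≤ dist y γ + dist γ x₀ := dist_triangle _ _ _
        exact mem_ball.mpr (by have := mem_ball.mp hyγ; linarith)
      have hlow : (N : ℝ≥0∞) * ENNReal.ofReal (v₀ * ρ ^ d) ≤ vol (⋃ γ ∈ t, ball γ ρ) := by
        rw [hsum]
        calc (N : ℝ≥0∞) * ENNReal.ofReal (v₀ * ρ ^ d)
            = ∑ _γ ∈ t, ENNReal.ofReal (v₀ * ρ ^ d) := by
              rw [Finset.sum_const, htcard, nsmul_eq_mul]
          _ ≤ ∑ γ ∈ t, vol (ball γ ρ) :=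
              Finset.sum_le_sum fun γ _ => hlower γ ρ hρ0.le hρr₀
      have hup : vol (⋃ γ ∈ t, ball γ ρ) ≤ ENNReal.ofReal (A * (1 + ((n:ℝ) + ρ)) ^ ν) :=
        le_trans (measure_mono hsub2) (hgrowth x₀ _ (by positivity))
      exact absurd (le_trans hlow hup) (not_le.mpr hBlt)
    have hsubU : Γ ⊆ ⋃ n : ℕ, (Γ ∩ ball x₀ n) := by
      intro γ hγ
      obtain ⟨n, hn⟩ := exists_nat_gt (dist γ x₀)
      exact Set.mem_iUnion.mpr ⟨n, hγ, mem_ball.mpr hn⟩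
    exact (Set.countable_iUnion fun n => (hfin n).countable).mono hsubU
  have hcntΓ : Countable Γ := hcnt.to_subtype
  have hdisjr : ∀ (γ γ' : Γ), γ ≠ γ' → Disjoint (ball (γ:X) r) (ball (γ':X) r) :=
    fun γ γ' hne => hΓ γ.2 γ'.2 (fun h => hne (Subtype.ext h))
  have hdisjρ : Pairwise (Function.onFun Disjoint fun γ : Γ => ball (γ:X) ρ) :=
    fun γ γ' hne => (hdisjr _ _ hne).mono (ball_subset_ball hρr) (ball_subset_ball hρr)
  -- constants
  set Kser : ℝ≥0∞ := ∑' k : ℕ, ENNReal.ofReal ((1 + (k:ℝ)) ^ e) with hKserdef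
  have hKserne : Kser ≠ ⊤ := aux_series_ne_top helt
  set Kt : ℝ≥0∞ := ENNReal.ofReal (A * 2 ^ ν) * Kser with hKtdef
  have hKtne : Kt ≠ ⊤ := ENNReal.mul_ne_top ENNReal.ofReal_ne_top hKserne
  have hρm : (0:ℝ) < (1 + ρ) ^ (-m) := Real.rpow_pos_of_pos (by linarith) _
  set D : ℝ≥0∞ := (ENNReal.ofReal (v₀ * ρ ^ d * (1 + ρ) ^ (-m)))⁻¹ with hDdef
  have hDden : (0:ℝ) < v₀ * ρ ^ d * (1 + ρ) ^ (-m) := by positivity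
  have hDne : D ≠ ⊤ := by
    rw [hDdef]
    simp [ENNReal.inv_ne_top, ENNReal.ofReal_eq_zero, not_le, hDden]
  set Ks : ℝ≥0∞ := D * (ENNReal.ofReal ((1 + ρ) ^ (-e)) * Kt) with hKsdef
  have hKsne : Ks ≠ ⊤ :=
    ENNReal.mul_ne_top hDne (ENNReal.mul_ne_top ENNReal.ofReal_ne_top hKtne)
  set CmE : ℝ≥0∞ := ENNReal.ofReal Cm with hCmEdef
  set TOT : ℝ≥0∞ := CmE ^ (2:ℝ) * Ks * Kt * ENNReal.ofReal (c₀ ^ (2:ℝ) * (A * (1+r) ^ ν))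
    with hTOTdef
  have hTOTne : TOT ≠ ⊤ := by
    rw [hTOTdef]
    exact ENNReal.mul_ne_top (ENNReal.mul_ne_top (ENNReal.mul_ne_top
      (ENNReal.rpow_ne_top_of_nonneg (by norm_num) ENNReal.ofReal_ne_top) hKsne) hKtne)
      ENNReal.ofReal_ne_top
  set Cfin : ℝ := (TOT ^ (2⁻¹:ℝ)).toReal + 1 with hCfindef
  have hCfinpos : 0 < Cfin := by
    have := ENNReal.toReal_nonneg (a := TOT ^ (2⁻¹:ℝ))
    rw [hCfindef]; linarith
  refine ⟨Cfin, hCfinpos, ?_⟩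
  intro R hR f hf
  -- the localized weight function
  set U : ℝ → Γ → X → ℝ≥0∞ := fun s γ x =>
    ((ball (γ:X) s)ᶜ).indicator (fun x => ENNReal.ofReal ((1 + dist x (γ:X)) ^ (-m))) x
    with hUdef
  have hUmeas : ∀ (s : ℝ) (γ : Γ), Measurable (U s γ) := by
    intro s γ
    apply Measurable.indicator _ measurableSet_ball.compl
    have hcont : Continuous fun x : X => (1 + dist x (γ:X)) ^ (-m) := by
      apply Continuous.rpow_const (continuous_const.add (continuous_id.dist continuous_const))
      intro x; left; exact (add_pos_of_pos_of_nonneg one_pos dist_nonneg).ne'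
    exact (ENNReal.continuous_ofReal.comp hcont).measurable
  -- key integral bound
  have key_int : ∀ (s : ℝ), 0 ≤ s → ∀ γ : Γ, ∫⁻ x, U s γ x ∂vol ≤
      Kt * ENNReal.ofReal ((1+s) ^ e) := by
    intro s hs γ
    have h := aux_tail vol A ν hA hν hgrowth m hmν (γ:X) s
    rw [max_eq_left hs] at h
    refine le_trans h ?_
    rw [ENNReal.ofReal_mul (by positivity), hKtdef]
    exact le_of_eq (by ring)
  -- key summation bound
  have key_sum : ∀ (s : ℝ), 0 ≤ s → ∀ x : X, ∑' γ : Γ, U s γ x ≤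
      Ks * ENNReal.ofReal ((1+s) ^ e) := by
    intro s hs x
    set H : X → ℝ≥0∞ :=
      ((ball x (s - ρ))ᶜ).indicator (fun y => ENNReal.ofReal ((1 + dist y x) ^ (-m))) with hHdef
    have claim : ∀ γ : Γ, U s γ x ≤ D * ∫⁻ y in ball (γ:X) ρ, H y ∂vol := by
      intro γ
      by_cases hxγ : x ∈ ball (γ:X) s
      · have : U s γ x = 0 := by
          simp only [hUdef]
          exact Set.indicator_of_notMem (by simpa using hxγ) _
        rw [this]; exact zero_le
      · have hdist : s ≤ dist x (γ:X) := by simpa [mem_ball, not_lt] using hxγ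
        have hUval : U s γ x = ENNReal.ofReal ((1 + dist x (γ:X)) ^ (-m)) := by
          simp only [hUdef]
          exact Set.indicator_of_mem (by simpa [mem_ball, not_lt] using hxγ) _
        have hlowpt : ∀ y ∈ ball (γ:X) ρ,
            ENNReal.ofReal ((1 + ρ) ^ (-m) * (1 + dist x (γ:X)) ^ (-m)) ≤ H y := by
          intro y hy
          have hyγ : dist y (γ:X) < ρ := mem_ball.mp hy
          have htri : dist x (γ:X) ≤ dist x y + dist y (γ:X) := dist_triangle _ _ _
          have htri2 : dist y x ≤ dist y (γ:X) + dist (γ:X) x := dist_triangle _ _ _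
          have hdyx : dist y x = dist x y := dist_comm _ _
          have hmem : y ∈ (ball x (s - ρ))ᶜ := by
            simp only [Set.mem_compl_iff, mem_ball, not_lt]
            linarith
          rw [hHdef]
          rw [Set.indicator_of_mem hmem]
          apply ENNReal.ofReal_le_ofReal
          have hub : 1 + dist y x ≤ (1 + ρ) * (1 + dist x (γ:X)) := by
            have h7 : dist (γ:X) x = dist x (γ:X) := dist_comm _ _
            nlinarith [dist_nonneg (x := x) (y := (γ:X))]
          calc (1 + ρ) ^ (-m) * (1 + dist x (γ:X)) ^ (-m)
              = ((1 + ρ) * (1 + dist x (γ:X))) ^ (-m) :=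
                (Real.mul_rpow (by linarith) (by positivity)).symm
            _ ≤ (1 + dist y x) ^ (-m) :=
                Real.rpow_le_rpow_of_nonpos (by positivity) hub (by linarith)
        have hint : ENNReal.ofReal (v₀ * ρ ^ d * (1 + ρ) ^ (-m)) * U s γ x
            ≤ ∫⁻ y in ball (γ:X) ρ, H y ∂vol := by
          calc ENNReal.ofReal (v₀ * ρ ^ d * (1 + ρ) ^ (-m)) * U s γ x
              = ENNReal.ofReal ((1 + ρ) ^ (-m) * (1 + dist x (γ:X)) ^ (-m)) *
                  ENNReal.ofReal (v₀ * ρ ^ d) := by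
                rw [hUval, ← ENNReal.ofReal_mul (by positivity),
                  ← ENNReal.ofReal_mul (by positivity)]
                ring_nf
            _ ≤ ENNReal.ofReal ((1 + ρ) ^ (-m) * (1 + dist x (γ:X)) ^ (-m)) *
                  vol (ball (γ:X) ρ) := by
                gcongr
                exact hlower (γ:X) ρ hρ0.le hρr₀
            _ = ∫⁻ _ in ball (γ:X) ρ,
                  ENNReal.ofReal ((1 + ρ) ^ (-m) * (1 + dist x (γ:X)) ^ (-m)) ∂vol :=
                (setLIntegral_const _ _).symm
            _ ≤ ∫⁻ y in ball (γ:X) ρ, H y ∂vol :=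
                setLIntegral_mono' measurableSet_ball hlowpt
        have hne0 : ENNReal.ofReal (v₀ * ρ ^ d * (1 + ρ) ^ (-m)) ≠ 0 := by
          simp [ENNReal.ofReal_eq_zero, not_le, hDden]
        rw [hDdef]
        exact (ENNReal.mul_le_iff_le_inv hne0 ENNReal.ofReal_ne_top).mp hint
    calc ∑' γ : Γ, U s γ x
        ≤ ∑' γ : Γ, D * ∫⁻ y in ball (γ:X) ρ, H y ∂vol := ENNReal.tsum_le_tsum claim
      _ = D * ∑' γ : Γ, ∫⁻ y in ball (γ:X) ρ, H y ∂vol := ENNReal.tsum_mul_left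
      _ = D * ∫⁻ y in ⋃ γ : Γ, ball (γ:X) ρ, H y ∂vol := by
          rw [lintegral_iUnion (fun γ => measurableSet_ball) hdisjρ]
      _ ≤ D * ∫⁻ y, H y ∂vol := by
          gcongr
          exact Measure.restrict_le_self
      _ ≤ D * (ENNReal.ofReal (A * 2 ^ ν * (1 + max (s - ρ) 0) ^ e) * Kser) := by
          gcongr
          exact aux_tail vol A ν hA hν hgrowth m hmν x (s - ρ)
      _ ≤ Ks * ENNReal.ofReal ((1+s) ^ e) := by
          have hM0 : (0:ℝ) ≤ max (s - ρ) 0 := le_max_right _ _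
          have hMs : s - ρ ≤ max (s - ρ) 0 := le_max_left _ _
          have hreal : (1 + max (s - ρ) 0) ^ e ≤ (1 + ρ) ^ (-e) * (1 + s) ^ e := by
            have hb : (0:ℝ) < 1 + s := by linarith
            have ha : (0:ℝ) < 1 + max (s - ρ) 0 := by linarith
            have hab : 1 + s ≤ (1 + ρ) * (1 + max (s - ρ) 0) := by
              have h8 : (1 + ρ) * (1 + max (s - ρ) 0) = 1 + ρ + max (s - ρ) 0 + ρ * max (s - ρ) 0 := by
                ring
              have h9 : 0 ≤ ρ * max (s - ρ) 0 := mul_nonneg hρ0.le hM0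
              linarith
            have h5 : ((1 + ρ) * (1 + max (s - ρ) 0)) ^ e ≤ (1 + s) ^ e :=
              Real.rpow_le_rpow_of_nonpos hb hab he0
            rw [Real.mul_rpow (by linarith) (by linarith)] at h5
            have h6 := mul_le_mul_of_nonneg_left h5 (Real.rpow_nonneg
              (show (0:ℝ) ≤ 1 + ρ by linarith) (-e))
            calc (1 + max (s - ρ) 0) ^ e
                = (1 + ρ) ^ (-e) * ((1 + ρ) ^ e * (1 + max (s - ρ) 0) ^ e) := by
                  rw [← mul_assoc, ← Real.rpow_add (by linarith), neg_add_cancel,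
                    Real.rpow_zero, one_mul]
              _ ≤ (1 + ρ) ^ (-e) * (1 + s) ^ e := h6
          calc D * (ENNReal.ofReal (A * 2 ^ ν * (1 + max (s - ρ) 0) ^ e) * Kser)
              ≤ D * (ENNReal.ofReal (A * 2 ^ ν * ((1 + ρ) ^ (-e) * (1 + s) ^ e)) * Kser) :=
                mul_le_mul_right (mul_le_mul_left (ENNReal.ofReal_le_ofReal
                  (mul_le_mul_of_nonneg_left hreal (by positivity))) Kser) D
            _ = Ks * ENNReal.ofReal ((1 + s) ^ e) := by
                rw [hKsdef, hKtdef]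
                rw [show A * 2 ^ ν * ((1 + ρ) ^ (-e) * (1 + s) ^ e)
                    = ((1 + ρ) ^ (-e)) * ((A * 2 ^ ν) * ((1 + s) ^ e)) by ring]
                rw [ENNReal.ofReal_mul (by positivity), ENNReal.ofReal_mul (by positivity)]
                ring
  -- coefficients
  set c : Γ → ℂ := fun γ => ∫ y, (starRingEnd ℂ) (v γ y) * f y ∂vol with hcdef
  set L2 : ℝ≥0∞ := ∫⁻ y, (‖f y‖₊ : ℝ≥0∞) ^ (2:ℝ) ∂vol with hL2def
  have help : ∀ g : X → ℂ, eLpNorm g 2 vol = (∫⁻ x, (‖g x‖₊ : ℝ≥0∞) ^ (2:ℝ) ∂vol) ^ (2⁻¹:ℝ) := by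
    intro g
    rw [eLpNorm_eq_lintegral_rpow_enorm_toReal (by norm_num) (by norm_num)]
    norm_num
    rfl
  have hfel : eLpNorm f 2 vol = L2 ^ (2⁻¹:ℝ) := help f
  have hL2ne : L2 ≠ ⊤ := by
    intro h
    have h2 := hf.2
    rw [hfel, h, ENNReal.top_rpow_of_pos (by norm_num)] at h2
    exact lt_irrefl _ h2
  have hfm : AEMeasurable (fun y => (‖f y‖₊ : ℝ≥0∞)) vol := hf.1.aemeasurable.enorm
  have hcb : ∀ γ : Γ, (‖c γ‖₊ : ℝ≥0∞) ≤ ENNReal.ofReal c₀ *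
      ((vol (ball (γ:X) r)) ^ (2⁻¹:ℝ) *
        (∫⁻ y in ball (γ:X) r, (‖f y‖₊ : ℝ≥0∞) ^ (2:ℝ) ∂vol) ^ (2⁻¹:ℝ)) := by
    intro γ
    calc (‖c γ‖₊ : ℝ≥0∞)
        ≤ ∫⁻ y, ‖(starRingEnd ℂ) (v γ y) * f y‖₊ ∂vol :=
          enorm_integral_le_lintegral_enorm _
      _ ≤ ∫⁻ y, (ball (γ:X) r).indicator
            (fun y => ENNReal.ofReal c₀ * (‖f y‖₊ : ℝ≥0∞)) y ∂vol := by
          apply lintegral_mono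
          intro y
          dsimp only
          by_cases hv0 : v γ y = 0
          · simp [hv0]
          · rw [Set.indicator_of_mem (hvsupp γ y hv0)]
            rw [nnnorm_mul, ENNReal.coe_mul, RCLike.nnnorm_conj]
            gcongr
            rw [← enorm_eq_nnnorm, ← ofReal_norm]
            exact ENNReal.ofReal_le_ofReal (hvbound γ y)
      _ = ∫⁻ y in ball (γ:X) r, ENNReal.ofReal c₀ * (‖f y‖₊ : ℝ≥0∞) ∂vol :=
          lintegral_indicator measurableSet_ball _
      _ = ENNReal.ofReal c₀ * ∫⁻ y in ball (γ:X) r, (‖f y‖₊ : ℝ≥0∞) ∂vol :=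
          lintegral_const_mul' _ _ ENNReal.ofReal_ne_top
      _ ≤ ENNReal.ofReal c₀ * ((vol (ball (γ:X) r)) ^ (2⁻¹:ℝ) *
            (∫⁻ y in ball (γ:X) r, (‖f y‖₊ : ℝ≥0∞) ^ (2:ℝ) ∂vol) ^ (2⁻¹:ℝ)) := by
          gcongr
          have hH := ENNReal.lintegral_mul_le_Lp_mul_Lq (vol.restrict (ball (γ:X) r)) aux_conj2
            (aemeasurable_const : AEMeasurable (fun _ : X => (1:ℝ≥0∞)) _) hfm.restrict
          simp only [Pi.mul_apply, one_mul, ENNReal.one_rpow, lintegral_one,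
            Measure.restrict_apply_univ, one_div] at hH
          exact hH
  have hcsq : ∀ γ : Γ, (‖c γ‖₊ : ℝ≥0∞) ^ (2:ℝ) ≤
      ENNReal.ofReal (c₀ ^ (2:ℝ) * (A * (1+r) ^ ν)) *
        ∫⁻ y in ball (γ:X) r, (‖f y‖₊ : ℝ≥0∞) ^ (2:ℝ) ∂vol := by
    intro γ
    calc (‖c γ‖₊ : ℝ≥0∞) ^ (2:ℝ)
        ≤ (ENNReal.ofReal c₀ * ((vol (ball (γ:X) r)) ^ (2⁻¹:ℝ) *
            (∫⁻ y in ball (γ:X) r, (‖f y‖₊ : ℝ≥0∞) ^ (2:ℝ) ∂vol) ^ (2⁻¹:ℝ))) ^ (2:ℝ) :=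
          ENNReal.rpow_le_rpow (hcb γ) (by norm_num)
      _ = ENNReal.ofReal c₀ ^ (2:ℝ) * (vol (ball (γ:X) r) *
            ∫⁻ y in ball (γ:X) r, (‖f y‖₊ : ℝ≥0∞) ^ (2:ℝ) ∂vol) := by
          rw [aux_mulsq, aux_mulsq, aux_sq, aux_sq]
      _ ≤ ENNReal.ofReal c₀ ^ (2:ℝ) * (ENNReal.ofReal (A * (1+r) ^ ν) *
            ∫⁻ y in ball (γ:X) r, (‖f y‖₊ : ℝ≥0∞) ^ (2:ℝ) ∂vol) := by
          gcongr
          exact hgrowth _ _ hr.le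
      _ = ENNReal.ofReal (c₀ ^ (2:ℝ) * (A * (1+r) ^ ν)) *
            ∫⁻ y in ball (γ:X) r, (‖f y‖₊ : ℝ≥0∞) ^ (2:ℝ) ∂vol := by
          rw [ENNReal.ofReal_rpow_of_pos hc₀,
            ENNReal.ofReal_mul (by positivity : (0:ℝ) ≤ c₀ ^ (2:ℝ)),
            ENNReal.ofReal_mul (by positivity : (0:ℝ) ≤ A)]
          ring
  have key_coef : ∑' γ : Γ, (‖c γ‖₊ : ℝ≥0∞) ^ (2:ℝ) ≤
      ENNReal.ofReal (c₀ ^ (2:ℝ) * (A * (1+r) ^ ν)) * L2 := by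
    calc ∑' γ : Γ, (‖c γ‖₊ : ℝ≥0∞) ^ (2:ℝ)
        ≤ ∑' γ : Γ, ENNReal.ofReal (c₀ ^ (2:ℝ) * (A * (1+r) ^ ν)) *
            ∫⁻ y in ball (γ:X) r, (‖f y‖₊ : ℝ≥0∞) ^ (2:ℝ) ∂vol :=
          ENNReal.tsum_le_tsum hcsq
      _ = ENNReal.ofReal (c₀ ^ (2:ℝ) * (A * (1+r) ^ ν)) *
            ∑' γ : Γ, ∫⁻ y in ball (γ:X) r, (‖f y‖₊ : ℝ≥0∞) ^ (2:ℝ) ∂vol :=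
          ENNReal.tsum_mul_left
      _ ≤ ENNReal.ofReal (c₀ ^ (2:ℝ) * (A * (1+r) ^ ν)) * L2 := by
          gcongr
          have hdisjr' : Pairwise (Function.onFun Disjoint fun γ : Γ => ball (γ:X) r) :=
            fun γ γ' hne => hdisjr _ _ hne
          rw [← lintegral_iUnion (fun γ => measurableSet_ball) hdisjr']
          exact setLIntegral_le_lintegral _ _
  -- uniform coefficient bound
  set Ec : ℝ≥0∞ := ENNReal.ofReal c₀ *
    ((ENNReal.ofReal (A * (1+r) ^ ν)) ^ (2⁻¹:ℝ) * L2 ^ (2⁻¹:ℝ)) with hEcdef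
  have hcu : ∀ γ : Γ, (‖c γ‖₊ : ℝ≥0∞) ≤ Ec := by
    intro γ
    refine le_trans (hcb γ) ?_
    rw [hEcdef]
    gcongr
    · exact hgrowth _ _ hr.le
    · exact setLIntegral_le_lintegral _ _
  have hEcne : Ec ≠ ⊤ := by
    rw [hEcdef]
    exact ENNReal.mul_ne_top ENNReal.ofReal_ne_top (ENNReal.mul_ne_top
      (ENNReal.rpow_ne_top_of_nonneg (by norm_num) ENNReal.ofReal_ne_top)
      (ENNReal.rpow_ne_top_of_nonneg (by norm_num) hL2ne))
  -- summability
  have hU0 : ∀ (γ : Γ) (x : X),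
      ENNReal.ofReal ((1 + dist x (γ:X)) ^ (-m)) = U 0 γ x := by
    intro γ x
    simp only [hUdef, ball_zero, Set.compl_empty, Set.indicator_univ]
  have hwE : ∀ (γ : Γ) (x : X), (‖w γ x‖₊ : ℝ≥0∞) ≤ CmE * U 0 γ x := by
    intro γ x
    rw [← hU0, hCmEdef, ← ENNReal.ofReal_mul hCm.le, ← enorm_eq_nnnorm, ← ofReal_norm]
    exact ENNReal.ofReal_le_ofReal (hwb γ x)
  have hbnd1 : ∀ (x : X) (γ : Γ),
      (‖c γ * w γ x‖₊ : ℝ≥0∞) ≤ Ec * (CmE * U 0 γ x) := by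
    intro x γ
    rw [nnnorm_mul, ENNReal.coe_mul]
    exact mul_le_mul' (hcu γ) (hwE γ x)
  have hbnd2 : ∀ (x : X) (γ : Γ),
      (‖c γ * (ball (γ:X) R).indicator (w γ) x‖₊ : ℝ≥0∞) ≤ Ec * (CmE * U 0 γ x) := by
    intro x γ
    rw [nnnorm_mul, ENNReal.coe_mul]
    refine mul_le_mul' (hcu γ) ?_
    refine le_trans ?_ (hwE γ x)
    by_cases hx : x ∈ ball (γ:X) R
    · rw [Set.indicator_of_mem hx]
    · rw [Set.indicator_of_notMem hx]
      simp
  have hS0 : ∀ x : X, (∑' γ : Γ, Ec * (CmE * U 0 γ x)) ≠ ⊤ := by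
    intro x
    have h1 : ∑' γ : Γ, Ec * (CmE * U 0 γ x) = Ec * (CmE * ∑' γ : Γ, U 0 γ x) := by
      rw [ENNReal.tsum_mul_left, ENNReal.tsum_mul_left]
    rw [h1]
    have h2 := key_sum 0 le_rfl x
    refine ENNReal.mul_ne_top hEcne (ENNReal.mul_ne_top
      (by rw [hCmEdef]; exact ENNReal.ofReal_ne_top) ?_)
    exact ne_top_of_le_ne_top (ENNReal.mul_ne_top hKsne ENNReal.ofReal_ne_top) h2
  have hsumm1 : ∀ x : X, Summable fun γ : Γ => c γ * w γ x := by
    intro x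
    apply Summable.of_nnnorm
    rw [← ENNReal.tsum_coe_ne_top_iff_summable]
    exact ne_top_of_le_ne_top (hS0 x) (ENNReal.tsum_le_tsum (hbnd1 x))
  have hsumm2 : ∀ x : X, Summable fun γ : Γ => c γ * (ball (γ:X) R).indicator (w γ) x := by
    intro x
    apply Summable.of_nnnorm
    rw [← ENNReal.tsum_coe_ne_top_iff_summable]
    exact ne_top_of_le_ne_top (hS0 x) (ENNReal.tsum_le_tsum (hbnd2 x))
  -- pointwise bound
  set u : Γ → X → ℂ := fun γ x => w γ x - (ball (γ:X) R).indicator (w γ) x with hudef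
  have huU : ∀ (γ : Γ) (x : X), (‖u γ x‖₊ : ℝ≥0∞) ≤ CmE * U R γ x := by
    intro γ x
    by_cases hx : x ∈ ball (γ:X) R
    · have : u γ x = 0 := by
        simp only [hudef]
        rw [Set.indicator_of_mem hx, sub_self]
      rw [this]; simp
    · have h1 : u γ x = w γ x := by
        simp only [hudef]
        rw [Set.indicator_of_notMem hx, sub_zero]
      have h2 : U R γ x = ENNReal.ofReal ((1 + dist x (γ:X)) ^ (-m)) := by
        simp only [hUdef]
        exact Set.indicator_of_mem (by simpa using hx) _
      rw [h1, h2, hCmEdef, ← ENNReal.ofReal_mul hCm.le, ← enorm_eq_nnnorm, ← ofReal_norm]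
      exact ENNReal.ofReal_le_ofReal (hwb γ x)
  have hgpt : ∀ x : X,
      (‖(∑' γ : Γ, c γ * w γ x) -
         ∑' γ : Γ, c γ * (ball (γ:X) R).indicator (w γ) x‖₊ : ℝ≥0∞) ^ (2:ℝ) ≤
      (∑' γ : Γ, (‖c γ‖₊ : ℝ≥0∞) ^ (2:ℝ) * U R γ x) *
        (CmE ^ (2:ℝ) * (Ks * ENNReal.ofReal ((1+R) ^ e))) := by
    intro x
    have hdiff : (∑' γ : Γ, c γ * w γ x) -
        (∑' γ : Γ, c γ * (ball (γ:X) R).indicator (w γ) x) = ∑' γ : Γ, c γ * u γ x := by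
      rw [← Summable.tsum_sub (hsumm1 x) (hsumm2 x)]
      congr 1
      funext γ
      simp only [hudef]
      ring
    rw [hdiff]
    calc (‖∑' γ : Γ, c γ * u γ x‖₊ : ℝ≥0∞) ^ (2:ℝ)
        ≤ (∑' γ : Γ, (‖c γ * u γ x‖₊ : ℝ≥0∞)) ^ (2:ℝ) :=
          ENNReal.rpow_le_rpow (aux_enorm_tsum _) (by norm_num)
      _ ≤ (∑' γ : Γ, ((‖c γ‖₊ : ℝ≥0∞) * (U R γ x) ^ (2⁻¹:ℝ)) *
            (CmE * (U R γ x) ^ (2⁻¹:ℝ))) ^ (2:ℝ) := by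
          refine ENNReal.rpow_le_rpow (ENNReal.tsum_le_tsum fun γ => ?_) (by norm_num)
          rw [nnnorm_mul, ENNReal.coe_mul]
          calc (‖c γ‖₊ : ℝ≥0∞) * (‖u γ x‖₊ : ℝ≥0∞)
              ≤ (‖c γ‖₊ : ℝ≥0∞) * (CmE * U R γ x) := by
                gcongr
                exact huU γ x
            _ = (‖c γ‖₊ : ℝ≥0∞) * (CmE * ((U R γ x) ^ (2⁻¹:ℝ) * (U R γ x) ^ (2⁻¹:ℝ))) := by
                rw [← ENNReal.rpow_add_of_nonneg _ _ (by norm_num) (by norm_num)]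
                norm_num
            _ = ((‖c γ‖₊ : ℝ≥0∞) * (U R γ x) ^ (2⁻¹:ℝ)) *
                (CmE * (U R γ x) ^ (2⁻¹:ℝ)) := by ring
      _ ≤ (((∑' γ : Γ, ((‖c γ‖₊ : ℝ≥0∞) * (U R γ x) ^ (2⁻¹:ℝ)) ^ (2:ℝ)) ^ (2⁻¹:ℝ)) *
            ((∑' γ : Γ, (CmE * (U R γ x) ^ (2⁻¹:ℝ)) ^ (2:ℝ)) ^ (2⁻¹:ℝ))) ^ (2:ℝ) :=
          ENNReal.rpow_le_rpow (aux_cs _ _) (by norm_num)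
      _ = (∑' γ : Γ, (‖c γ‖₊ : ℝ≥0∞) ^ (2:ℝ) * U R γ x) *
            (∑' γ : Γ, CmE ^ (2:ℝ) * U R γ x) := by
          simp only [aux_mulsq, aux_sq, aux_sq']
      _ ≤ (∑' γ : Γ, (‖c γ‖₊ : ℝ≥0∞) ^ (2:ℝ) * U R γ x) *
            (CmE ^ (2:ℝ) * (Ks * ENNReal.ofReal ((1+R) ^ e))) := by
          refine mul_le_mul_right ?_ _
          rw [ENNReal.tsum_mul_left]
          exact mul_le_mul_right (key_sum R hR.le x) _
  -- conclusion
  rw [help, hfel]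
  set X1 : ℝ≥0∞ := ENNReal.ofReal ((1+R) ^ e) with hX1def
  have hX1ne : X1 ≠ ⊤ := ENNReal.ofReal_ne_top
  have hCmE2ne : CmE ^ (2:ℝ) ≠ ⊤ :=
    ENNReal.rpow_ne_top_of_nonneg (by norm_num) ENNReal.ofReal_ne_top
  have hc2ne : ∀ γ : Γ, (‖c γ‖₊ : ℝ≥0∞) ^ (2:ℝ) ≠ ⊤ :=
    fun γ => ENNReal.rpow_ne_top_of_nonneg (by norm_num) ENNReal.coe_ne_top
  have hlint : ∫⁻ x, (‖(∑' γ : Γ, c γ * w γ x) -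
      ∑' γ : Γ, c γ * (ball (γ:X) R).indicator (w γ) x‖₊ : ℝ≥0∞) ^ (2:ℝ) ∂vol ≤
      TOT * (X1 * X1) * L2 := by
    calc ∫⁻ x, (‖(∑' γ : Γ, c γ * w γ x) -
          ∑' γ : Γ, c γ * (ball (γ:X) R).indicator (w γ) x‖₊ : ℝ≥0∞) ^ (2:ℝ) ∂vol
        ≤ ∫⁻ x, (∑' γ : Γ, (‖c γ‖₊ : ℝ≥0∞) ^ (2:ℝ) * U R γ x) *
            (CmE ^ (2:ℝ) * (Ks * X1)) ∂vol := lintegral_mono fun x => hgpt x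
      _ = (∫⁻ x, ∑' γ : Γ, (‖c γ‖₊ : ℝ≥0∞) ^ (2:ℝ) * U R γ x ∂vol) *
            (CmE ^ (2:ℝ) * (Ks * X1)) :=
          lintegral_mul_const' _ _
            (ENNReal.mul_ne_top hCmE2ne (ENNReal.mul_ne_top hKsne hX1ne))
      _ = (∑' γ : Γ, ∫⁻ x, (‖c γ‖₊ : ℝ≥0∞) ^ (2:ℝ) * U R γ x ∂vol) *
            (CmE ^ (2:ℝ) * (Ks * X1)) := by
          rw [lintegral_tsum fun γ => ((hUmeas R γ).const_mul _).aemeasurable]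
      _ = (∑' γ : Γ, (‖c γ‖₊ : ℝ≥0∞) ^ (2:ℝ) * ∫⁻ x, U R γ x ∂vol) *
            (CmE ^ (2:ℝ) * (Ks * X1)) := by
          congr 1
          exact tsum_congr fun γ => lintegral_const_mul' _ _ (hc2ne γ)
      _ ≤ (∑' γ : Γ, (‖c γ‖₊ : ℝ≥0∞) ^ (2:ℝ) * (Kt * X1)) *
            (CmE ^ (2:ℝ) * (Ks * X1)) := by
          gcongr with γ
          exact key_int R hR.le γ
      _ = ((∑' γ : Γ, (‖c γ‖₊ : ℝ≥0∞) ^ (2:ℝ)) * (Kt * X1)) *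
            (CmE ^ (2:ℝ) * (Ks * X1)) := by
          rw [ENNReal.tsum_mul_right]
      _ ≤ ((ENNReal.ofReal (c₀ ^ (2:ℝ) * (A * (1+r) ^ ν)) * L2) * (Kt * X1)) *
            (CmE ^ (2:ℝ) * (Ks * X1)) := by
          gcongr
      _ = TOT * (X1 * X1) * L2 := by
          rw [hTOTdef]
          ring
  calc (∫⁻ x, (‖(∑' γ : Γ, c γ * w γ x) -
        ∑' γ : Γ, c γ * (ball (γ:X) R).indicator (w γ) x‖₊ : ℝ≥0∞) ^ (2:ℝ) ∂vol) ^ (2⁻¹:ℝ)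
      ≤ (TOT * (X1 * X1) * L2) ^ (2⁻¹:ℝ) := ENNReal.rpow_le_rpow hlint (by norm_num)
    _ = TOT ^ (2⁻¹:ℝ) * X1 * L2 ^ (2⁻¹:ℝ) := by
        simp only [aux_mulhalf, aux_selfmul, aux_sq']
        try ring
    _ ≤ ENNReal.ofReal (Cfin * (1 + R) ^ (ν - μ')) * L2 ^ (2⁻¹:ℝ) := by
        gcongr
        have hTne : TOT ^ (2⁻¹:ℝ) ≠ ⊤ := ENNReal.rpow_ne_top_of_nonneg (by norm_num) hTOTne
        have h1 : TOT ^ (2⁻¹:ℝ) ≤ ENNReal.ofReal Cfin := by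
          conv_lhs => rw [← ENNReal.ofReal_toReal hTne]
          exact ENNReal.ofReal_le_ofReal (by rw [hCfindef]; linarith)
        have h2 : X1 ≤ ENNReal.ofReal ((1 + R) ^ (ν - μ')) := by
          rw [hX1def]
          exact ENNReal.ofReal_le_ofReal
            (Real.rpow_le_rpow_of_exponent_le (by linarith) heμ)
        calc TOT ^ (2⁻¹:ℝ) * X1
            ≤ ENNReal.ofReal Cfin * ENNReal.ofReal ((1 + R) ^ (ν - μ')) := mul_le_mul' h1 h2
          _ = ENNReal.ofReal (Cfin * (1 + R) ^ (ν - μ')) :=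
            (ENNReal.ofReal_mul hCfinpos.le).symm
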